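/- Every quilt-affine function g : ℕ^d → ℕ (i.e., a quilt-affine function whose outputs are all nonnegative) is obliviously-computable. -/

import Mathlib

/-- A chemical reaction network with species type `σ`, designated input species
`inputs i` for each of the `d` inputs, an output species, and a leader species. -/
structure CRN (d : ℕ) (σ : Type) [Fintype σ] [DecidableEq σ] where
  /-- Each reaction is a pair `(r, p)` of reactant counts and product counts. -/
  reactions : Finset ((σ → ℕ) × (σ → ℕ))
  inputs : Fin d → σ
  output : σ
  leader : σ
  inputs_inj : Function.Injective inputs
  leader_not_input : ∀ i, inputs i ≠ leader

namespace CRN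

variable {d : ℕ} {σ : Type} [Fintype σ] [DecidableEq σ]

/-- One reaction step: some reaction `(r, p)` with `r ≤ c` pointwise fires,
yielding `c - r + p`. -/
def Step (C : CRN d σ) (c c' : σ → ℕ) : Prop :=
  ∃ rp ∈ C.reactions, rp.1 ≤ c ∧ c' = c - rp.1 + rp.2

/-- Reachability by a finite sequence of reaction steps. -/
def Reachable (C : CRN d σ) : (σ → ℕ) → (σ → ℕ) → Prop :=
  Relation.ReflTransGen C.Step

/-- The initial configuration encoding input `x`: count `x i` of input species
`inputs i`, count 1 of the leader, count 0 of everything else. -/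
def init (C : CRN d σ) (x : Fin d → ℕ) : σ → ℕ :=
  fun s => (∑ i, if C.inputs i = s then x i else 0) + (if s = C.leader then 1 else 0)

/-- A configuration is stable if the output count never changes from it. -/
def Stable (C : CRN d σ) (c : σ → ℕ) : Prop :=
  ∀ c', C.Reachable c c' → c' C.output = c C.output

/-- `C` stably computes `f` if from every configuration reachable from an initial
configuration, a stable configuration with correct output count is reachable. -/
def StablyComputes (C : CRN d σ) (f : (Fin d → ℕ) → ℕ) : Prop :=
  ∀ x c, C.Reachable (C.init x) c →
    ∃ o, C.Reachable c o ∧ C.Stable o ∧ o C.output = f x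

/-- A CRN is output-oblivious if the output species is never a reactant. -/
def OutputOblivious (C : CRN d σ) : Prop :=
  ∀ rp ∈ C.reactions, rp.1 C.output = 0

/-- A CRN is output-monotonic if no reaction decreases the output species count. -/
def OutputMonotonic (C : CRN d σ) : Prop :=
  ∀ rp ∈ C.reactions, rp.1 C.output ≤ rp.2 C.output

end CRN

/-- `f` is obliviously-computable if some output-oblivious CRN stably computes it. -/
def ObliviouslyComputable {d : ℕ} (f : (Fin d → ℕ) → ℕ) : Prop :=
  ∃ (n : ℕ) (C : CRN d (Fin n)), C.OutputOblivious ∧ C.StablyComputes f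

/-- A function `g : ℕ^d → ℤ` is quilt-affine if it is nondecreasing and is the sum
of a rational linear function with nonnegative gradient and a periodic offset. -/
def QuiltAffine {d : ℕ} (g : (Fin d → ℕ) → ℤ) : Prop :=
  Monotone g ∧
  ∃ p : ℕ, 0 < p ∧
    ∃ (grad : Fin d → ℚ) (B : (Fin d → ZMod p) → ℚ),
      (∀ i, 0 ≤ grad i) ∧
      ∀ x : Fin d → ℕ,
        (g x : ℚ) = (∑ i, grad i * (x i : ℚ)) + B (fun i => (x i : ZMod p))

/-! ### Transport of a CRN along an equivalence of species types -/

section Transport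

variable {d : ℕ} {σ τ : Type} [Fintype σ] [DecidableEq σ] [Fintype τ] [DecidableEq τ]

def CRN.map (e : σ ≃ τ) (C : CRN d σ) : CRN d τ where
  reactions := C.reactions.image fun rp => (rp.1 ∘ e.symm, rp.2 ∘ e.symm)
  inputs := fun i => e (C.inputs i)
  output := e C.output
  leader := e C.leader
  inputs_inj := fun i j h => C.inputs_inj (e.injective h)
  leader_not_input := fun i h => C.leader_not_input i (e.injective h)

lemma CRN.map_step (e : σ ≃ τ) (C : CRN d σ) {c c' : τ → ℕ} :
    (C.map e).Step c c' ↔ C.Step (c ∘ e) (c' ∘ e) := by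
  constructor
  · rintro ⟨rp', hmem, hle, rfl⟩
    simp only [CRN.map, Finset.mem_image] at hmem
    obtain ⟨rp, hrp, rfl⟩ := hmem
    refine ⟨rp, hrp, Pi.le_def.mpr fun s => ?_, ?_⟩
    · simpa using Pi.le_def.mp hle (e s)
    · funext s
      simp [Pi.sub_apply, Pi.add_apply]
  · rintro ⟨rp, hrp, hle, heq⟩
    refine ⟨(rp.1 ∘ e.symm, rp.2 ∘ e.symm),
      Finset.mem_image_of_mem _ hrp, Pi.le_def.mpr fun t => ?_, ?_⟩
    · simpa using Pi.le_def.mp hle (e.symm t)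
    · funext t
      have := congrFun heq (e.symm t)
      simpa [Pi.sub_apply, Pi.add_apply] using this

lemma CRN.map_reachable (e : σ ≃ τ) (C : CRN d σ) {c c' : τ → ℕ}
    (h : (C.map e).Reachable c c') : C.Reachable (c ∘ e) (c' ∘ e) :=
  Relation.ReflTransGen.lift (fun a => a ∘ e)
    (fun _ _ hab => (CRN.map_step e C).mp hab) _ _ h

lemma CRN.map_reachable' (e : σ ≃ τ) (C : CRN d σ) {a b : σ → ℕ}
    (h : C.Reachable a b) : (C.map e).Reachable (a ∘ e.symm) (b ∘ e.symm) := by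
  refine Relation.ReflTransGen.lift (fun a => a ∘ e.symm)
    (fun u v huv => ?_) _ _ h
  show (C.map e).Step (u ∘ e.symm) (v ∘ e.symm)
  rw [CRN.map_step]
  have h1 : (u ∘ e.symm) ∘ e = u := by funext s; simp
  have h2 : (v ∘ e.symm) ∘ e = v := by funext s; simp
  rw [h1, h2]; exact huv

lemma CRN.map_init (e : σ ≃ τ) (C : CRN d σ) (x : Fin d → ℕ) :
    (C.map e).init x = C.init x ∘ e.symm := by
  funext t
  simp only [CRN.init, CRN.map, Function.comp_apply]
  congr 1
  · refine Finset.sum_congr rfl fun i _ => ?_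
    congr 1
    simp [Equiv.apply_eq_iff_eq_symm_apply]
  · by_cases h : t = e C.leader <;> simp [h, Equiv.symm_apply_eq]

lemma obliviouslyComputable_of_CRN {d : ℕ} {f : (Fin d → ℕ) → ℕ}
    (C : CRN d σ) (hob : C.OutputOblivious) (hsc : C.StablyComputes f) :
    ObliviouslyComputable f := by
  classical
  set e := Fintype.equivFin σ with he
  refine ⟨Fintype.card σ, C.map e, ?_, ?_⟩
  · rintro rp' hmem
    simp only [CRN.map, Finset.mem_image] at hmem
    obtain ⟨rp, hrp, rfl⟩ := hmem
    simpa [CRN.map] using hob rp hrp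
  · intro x c hreach
    have hinit : ((C.map e).init x) ∘ e = C.init x := by
      rw [CRN.map_init]; funext s; simp
    have h1 : C.Reachable (C.init x) (c ∘ e) := by
      have := CRN.map_reachable e C hreach
      rwa [hinit] at this
    obtain ⟨o, ho1, ho2, ho3⟩ := hsc x (c ∘ e) h1
    refine ⟨o ∘ e.symm, ?_, ?_, ?_⟩
    · have := CRN.map_reachable' e C ho1
      have hc : (c ∘ e) ∘ e.symm = c := by funext t; simp
      rwa [hc] at this
    · intro c'' h''
      have := CRN.map_reachable e C h''
      have hoe : (o ∘ e.symm) ∘ e = o := by funext s; simp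
      rw [hoe] at this
      have := ho2 (c'' ∘ e) this
      simpa [CRN.map] using this
    · simpa [CRN.map] using ho3

end Transport


/-! ### The construction -/

namespace QAC

/-- Species: inputs `X i`, output `Y`, leader `L`, and memory species `M q`. -/
abbrev Sp (d p : ℕ) : Type := Fin d ⊕ Unit ⊕ Unit ⊕ (Fin d → ZMod p)

variable (d p : ℕ)

def spX (i : Fin d) : Sp d p := Sum.inl i
def spY : Sp d p := Sum.inr (Sum.inl ())
def spL : Sp d p := Sum.inr (Sum.inr (Sum.inl ()))
def spM (q : Fin d → ZMod p) : Sp d p := Sum.inr (Sum.inr (Sum.inr q))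

/-- unit vector in `ℕ^d`. -/
def en (i : Fin d) : Fin d → ℕ := fun j => if j = i then 1 else 0

/-- unit vector in `(ZMod p)^d`. -/
def eZ (i : Fin d) : Fin d → ZMod p := fun j => if j = i then 1 else 0

/-- residue of a configuration of inputs. -/
def cbar (v : Fin d → ℕ) : Fin d → ZMod p := fun i => (v i : ZMod p)

/-- lift of a residue vector. -/
def lift (q : Fin d → ZMod p) : Fin d → ℕ := fun i => (q i).val

variable (g : (Fin d → ℕ) → ℕ)

/-- output increment when consuming an `X i` in residue state `q`. -/
def δ (q : Fin d → ZMod p) (i : Fin d) : ℕ :=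
  g (lift d p q + en d i) - g (lift d p q)

/-- reactant of the initial reaction: one leader. -/
def r0 : Sp d p → ℕ := fun s =>
  match s with
  | .inr (.inr (.inl _)) => 1
  | _ => 0

/-- product of the initial reaction: one `M 0` and `k = g 0` outputs. -/
def p0 (k : ℕ) : Sp d p → ℕ := fun s =>
  match s with
  | .inr (.inl _) => k
  | .inr (.inr (.inr q)) => if q = 0 then 1 else 0
  | _ => 0

/-- reactant of a consuming reaction: one `M q` and one `X i`. -/
def r1 (q : Fin d → ZMod p) (i : Fin d) : Sp d p → ℕ := fun s =>
  match s with
  | .inl j => if j = i then 1 else 0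
  | .inr (.inr (.inr q')) => if q' = q then 1 else 0
  | _ => 0

/-- product of a consuming reaction: one `M (q + e_i)` and `k` outputs. -/
def p1 (q : Fin d → ZMod p) (i : Fin d) (k : ℕ) : Sp d p → ℕ := fun s =>
  match s with
  | .inr (.inl _) => k
  | .inr (.inr (.inr q')) => if q' = q + eZ d p i then 1 else 0
  | _ => 0

variable [NeZero p]

/-- The CRN computing a quilt-affine function. -/
def crn : CRN d (Sp d p) where
  reactions := insert (r0 d p, p0 d p (g 0))
    (Finset.image
      (fun qi : (Fin d → ZMod p) × Fin d =>
        (r1 d p qi.1 qi.2, p1 d p qi.1 qi.2 (δ d p g qi.1 qi.2)))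
      Finset.univ)
  inputs := spX d p
  output := spY d p
  leader := spL d p
  inputs_inj := fun i j h => by simpa [spX] using h
  leader_not_input := fun i h => by simp [spX, spL] at h

/-- the initial configuration, described concretely. -/
def initconf (x : Fin d → ℕ) : Sp d p → ℕ := fun s =>
  match s with
  | .inl i => x i
  | .inr (.inr (.inl _)) => 1
  | _ => 0

/-- intermediate configurations: `v` of the input has been consumed. -/
def conf (x v : Fin d → ℕ) : Sp d p → ℕ := fun s =>
  match s with
  | .inl i => x i - v i
  | .inr (.inl _) => g v
  | .inr (.inr (.inl _)) => 0
  | .inr (.inr (.inr q)) => if q = cbar d p v then 1 else 0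

@[simp] lemma crn_inputs : (crn d p g).inputs = spX d p := rfl
@[simp] lemma crn_output : (crn d p g).output = spY d p := rfl
@[simp] lemma crn_leader : (crn d p g).leader = spL d p := rfl

lemma init_eq (x : Fin d → ℕ) : (crn d p g).init x = initconf d p x := by
  funext s
  rcases s with i | ⟨⟨⟩⟩ | ⟨⟨⟩⟩ | q <;>
    simp [CRN.init, initconf, spX, spL, Finset.sum_ite_eq']

lemma cbar_zero : cbar d p (0 : Fin d → ℕ) = 0 := by
  funext j; simp [cbar]

lemma cbar_lift (q : Fin d → ZMod p) : cbar d p (lift d p q) = q := by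
  funext j
  simp [cbar, lift, ZMod.natCast_rightInverse (q j)]

lemma cbar_add (v : Fin d → ℕ) (i : Fin d) :
    cbar d p (v + en d i) = cbar d p v + eZ d p i := by
  funext j
  simp only [cbar, en, eZ, Pi.add_apply, Nat.cast_add]
  congr 1
  split <;> simp

section Math

variable {grad : Fin d → ℚ} {B : (Fin d → ZMod p) → ℚ}
  (hB : ∀ x : Fin d → ℕ,
    (g x : ℚ) = (∑ i, grad i * (x i : ℚ)) + B (fun i => (x i : ZMod p)))

include hB

lemma diff_eq (v : Fin d → ℕ) (i : Fin d) :
    (g (v + en d i) : ℚ) - g v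
      = grad i + B (cbar d p v + eZ d p i) - B (cbar d p v) := by
  have h1 := hB (v + en d i)
  have h2 := hB v
  have hc : (fun j => (((v + en d i) j : ℕ) : ZMod p)) = cbar d p v + eZ d p i := by
    exact cbar_add d p v i
  have hc2 : (fun j => ((v j : ℕ) : ZMod p)) = cbar d p v := rfl
  rw [hc] at h1
  rw [hc2] at h2
  have hsum : (∑ j, grad j * (((v + en d i) j : ℕ) : ℚ))
      = (∑ j, grad j * (v j : ℚ)) + grad i := by
    have : ∀ j, grad j * (((v + en d i) j : ℕ) : ℚ)
        = grad j * (v j : ℚ) + (if j = i then grad j else 0) := by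
      intro j
      simp only [Pi.add_apply, en, Nat.cast_add]
      split <;> push_cast <;> ring
    rw [Finset.sum_congr rfl fun j _ => this j, Finset.sum_add_distrib,
      Finset.sum_ite_eq' Finset.univ i grad]
    simp
  rw [h1, h2, hsum]
  ring

lemma gdiff (hm : Monotone g) (v : Fin d → ℕ) (i : Fin d) :
    g (v + en d i) = g v + δ d p g (cbar d p v) i := by
  set q := cbar d p v with hq
  have hle1 : v ≤ v + en d i := by
    intro j; simp [Pi.add_apply]
  have hle2 : lift d p q ≤ lift d p q + en d i := by
    intro j; simp [Pi.add_apply]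
  have h1 := diff_eq d p g hB v i
  have h2 := diff_eq d p g hB (lift d p q) i
  rw [cbar_lift] at h2
  have key : (g (v + en d i) : ℚ) - g v
      = (g (lift d p q + en d i) : ℚ) - g (lift d p q) := by rw [h1, h2]
  have hδ : (δ d p g q i : ℚ) = (g (lift d p q + en d i) : ℚ) - g (lift d p q) := by
    have := hm hle2
    rw [δ]
    push_cast [Nat.cast_sub this]
    ring
  have : (g (v + en d i) : ℚ) = (g v : ℚ) + δ d p g q i := by
    rw [hδ]; linarith [key]
  exact_mod_cast this

end Math

lemma conf_step_eq {grad : Fin d → ℚ} {B : (Fin d → ZMod p) → ℚ}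
    (hB : ∀ x : Fin d → ℕ,
      (g x : ℚ) = (∑ i, grad i * (x i : ℚ)) + B (fun i => (x i : ZMod p)))
    (hm : Monotone g) (x v : Fin d → ℕ) (i : Fin d) :
    conf d p g x v - r1 d p (cbar d p v) i + p1 d p (cbar d p v) i (δ d p g (cbar d p v) i)
      = conf d p g x (v + en d i) := by
  funext s
  rcases s with j | ⟨⟨⟩⟩ | ⟨⟨⟩⟩ | q
  · simp only [Pi.add_apply, Pi.sub_apply, conf, r1, p1, en]
    split <;> omega
  · simp only [Pi.add_apply, Pi.sub_apply, conf, r1, p1]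
    rw [gdiff d p g hB hm v i]
    omega
  · simp [Pi.add_apply, Pi.sub_apply, conf, r1, p1]
  · simp only [Pi.add_apply, Pi.sub_apply, conf, r1, p1, cbar_add]
    split_ifs <;> simp_all

lemma step_to_conf0 (x : Fin d → ℕ) :
    (crn d p g).Step (initconf d p x) (conf d p g x 0) := by
  refine ⟨(r0 d p, p0 d p (g 0)), Finset.mem_insert_self _ _, Pi.le_def.mpr fun s => ?_, ?_⟩
  · rcases s with j | ⟨⟨⟩⟩ | ⟨⟨⟩⟩ | q <;> simp [r0, initconf]
  · funext s
    rcases s with j | ⟨⟨⟩⟩ | ⟨⟨⟩⟩ | q <;>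
      simp [Pi.add_apply, Pi.sub_apply, r0, p0, initconf, conf, cbar_zero]

lemma step_to_next {grad : Fin d → ℚ} {B : (Fin d → ZMod p) → ℚ}
    (hB : ∀ x : Fin d → ℕ,
      (g x : ℚ) = (∑ i, grad i * (x i : ℚ)) + B (fun i => (x i : ZMod p)))
    (hm : Monotone g) (x v : Fin d → ℕ) (i : Fin d) (hi : v i < x i) :
    (crn d p g).Step (conf d p g x v) (conf d p g x (v + en d i)) := by
  refine ⟨(r1 d p (cbar d p v) i, p1 d p (cbar d p v) i (δ d p g (cbar d p v) i)),
    ?_, Pi.le_def.mpr fun s => ?_, (conf_step_eq d p g hB hm x v i).symm⟩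
  · exact Finset.mem_insert_of_mem
      (Finset.mem_image_of_mem _ (Finset.mem_univ (cbar d p v, i)))
  · rcases s with j | ⟨⟨⟩⟩ | ⟨⟨⟩⟩ | q
    · simp only [r1, conf]
      split_ifs with h
      · subst h; omega
      · exact Nat.zero_le _
    · simp [r1, conf]
    · simp [r1, conf]
    · simp only [r1, conf]
      split_ifs <;> simp_all

lemma step_from_init (x : Fin d → ℕ) (c' : Sp d p → ℕ)
    (h : (crn d p g).Step (initconf d p x) c') : c' = conf d p g x 0 := by
  obtain ⟨rp, hmem, hle, rfl⟩ := h
  rcases Finset.mem_insert.mp hmem with h0 | h1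
  · subst h0
    funext s
    rcases s with j | ⟨⟨⟩⟩ | ⟨⟨⟩⟩ | q <;>
      simp [Pi.add_apply, Pi.sub_apply, r0, p0, initconf, conf, cbar_zero]
  · exfalso
    obtain ⟨⟨q, i⟩, _, rfl⟩ := Finset.mem_image.mp h1
    have := Pi.le_def.mp hle (spM d p q)
    simp [r1, spM, initconf] at this

lemma step_from_conf {grad : Fin d → ℚ} {B : (Fin d → ZMod p) → ℚ}
    (hB : ∀ x : Fin d → ℕ,
      (g x : ℚ) = (∑ i, grad i * (x i : ℚ)) + B (fun i => (x i : ZMod p)))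
    (hm : Monotone g) (x v : Fin d → ℕ) (hv : v ≤ x) (c' : Sp d p → ℕ)
    (h : (crn d p g).Step (conf d p g x v) c') :
    ∃ i, v i < x i ∧ c' = conf d p g x (v + en d i) := by
  obtain ⟨rp, hmem, hle, rfl⟩ := h
  rcases Finset.mem_insert.mp hmem with h0 | h1
  · exfalso
    subst h0
    have := Pi.le_def.mp hle (spL d p)
    simp [r0, spL, conf] at this
  · obtain ⟨⟨q, i⟩, _, rfl⟩ := Finset.mem_image.mp h1
    have hq : q = cbar d p v := by
      have := Pi.le_def.mp hle (spM d p q)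
      simp only [r1, spM, conf] at this
      by_contra hne
      simp [hne] at this
    subst hq
    have hxi : v i < x i := by
      have := Pi.le_def.mp hle (spX d p i)
      simp [r1, spX, conf] at this
      have hvx := hv i
      omega
    exact ⟨i, hxi, (conf_step_eq d p g hB hm x v i).symm ▸ rfl⟩

lemma no_step_from_full (x : Fin d → ℕ) (c' : Sp d p → ℕ) :
    ¬ (crn d p g).Step (conf d p g x x) c' := by
  rintro ⟨rp, hmem, hle, -⟩
  rcases Finset.mem_insert.mp hmem with h0 | h1
  · subst h0
    have := Pi.le_def.mp hle (spL d p)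
    simp [r0, spL, conf] at this
  · obtain ⟨⟨q, i⟩, -, rfl⟩ := Finset.mem_image.mp h1
    have := Pi.le_def.mp hle (spX d p i)
    simp [r1, spX, conf] at this

lemma stable_full (x : Fin d → ℕ) : (crn d p g).Stable (conf d p g x x) := by
  intro c' h
  have : c' = conf d p g x x := by
    induction h with
    | refl => rfl
    | tail hab hbc ih => exact absurd (ih ▸ hbc) (no_step_from_full d p g x _)
  rw [this]

lemma reach_full {grad : Fin d → ℚ} {B : (Fin d → ZMod p) → ℚ}
    (hB : ∀ x : Fin d → ℕ,
      (g x : ℚ) = (∑ i, grad i * (x i : ℚ)) + B (fun i => (x i : ZMod p)))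
    (hm : Monotone g) (x : Fin d → ℕ) :
    ∀ (n : ℕ) (v : Fin d → ℕ), v ≤ x → (∑ i, (x i - v i)) = n →
      (crn d p g).Reachable (conf d p g x v) (conf d p g x x) := by
  intro n
  induction n with
  | zero =>
    intro v hv hs
    have : v = x := by
      funext i
      have h1 : v i ≤ x i := hv i
      have h2 : x i - v i = 0 := Finset.sum_eq_zero_iff.mp hs i (Finset.mem_univ i)
      omega
    rw [this]
    exact Relation.ReflTransGen.refl
  | succ n ih =>
    intro v hv hs
    have : ∃ i, x i - v i ≠ 0 := by
      by_contra hc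
      push_neg at hc
      rw [Finset.sum_eq_zero fun i _ => hc i] at hs
      omega
    obtain ⟨i, hi⟩ := this
    have hxi : v i < x i := by omega
    have hv' : v + en d i ≤ x := by
      intro j
      have hj : v j ≤ x j := hv j
      simp only [Pi.add_apply, en]
      split_ifs with h
      · subst h; omega
      · omega
    have hs' : (∑ j, (x j - (v + en d i) j)) = n := by
      have h2 : ∑ j ∈ Finset.univ.erase i, (x j - v j) + (x i - v i)
          = ∑ j, (x j - v j) := Finset.sum_erase_add _ _ (Finset.mem_univ i)
      have h3 : ∑ j ∈ Finset.univ.erase i, (x j - (v + en d i) j) + (x i - (v + en d i) i)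
          = ∑ j, (x j - (v + en d i) j) := Finset.sum_erase_add _ _ (Finset.mem_univ i)
      have h4 : ∑ j ∈ Finset.univ.erase i, (x j - (v + en d i) j)
          = ∑ j ∈ Finset.univ.erase i, (x j - v j) := by
        refine Finset.sum_congr rfl fun j hj => ?_
        have hji := (Finset.mem_erase.mp hj).1
        simp [en, Pi.add_apply, hji]
      have h5 : (v + en d i) i = v i + 1 := by simp [en, Pi.add_apply]
      rw [← h3, h4, h5]
      rw [← h2] at hs
      omega
    exact Relation.ReflTransGen.head (step_to_next d p g hB hm x v i hxi)
      (ih (v + en d i) hv' hs')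

lemma invariant {grad : Fin d → ℚ} {B : (Fin d → ZMod p) → ℚ}
    (hB : ∀ x : Fin d → ℕ,
      (g x : ℚ) = (∑ i, grad i * (x i : ℚ)) + B (fun i => (x i : ZMod p)))
    (hm : Monotone g) (x : Fin d → ℕ) (c : Sp d p → ℕ)
    (h : (crn d p g).Reachable ((crn d p g).init x) c) :
    c = initconf d p x ∨ ∃ v, v ≤ x ∧ c = conf d p g x v := by
  induction h with
  | refl => exact Or.inl (init_eq d p g x)
  | tail hab hbc ih =>
    rcases ih with rfl | ⟨v, hv, rfl⟩
    · refine Or.inr ⟨0, fun i => Nat.zero_le _, ?_⟩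
      exact step_from_init d p g x _ hbc
    · obtain ⟨i, hxi, hc⟩ := step_from_conf d p g hB hm x v hv _ hbc
      refine Or.inr ⟨v + en d i, ?_, hc⟩
      intro j
      have hj : v j ≤ x j := hv j
      simp only [Pi.add_apply, en]
      split_ifs with h
      · subst h; omega
      · omega

lemma crn_oblivious : (crn d p g).OutputOblivious := by
  rintro rp hmem
  rcases Finset.mem_insert.mp hmem with h0 | h1
  · subst h0; rfl
  · obtain ⟨⟨q, i⟩, -, rfl⟩ := Finset.mem_image.mp h1
    rfl

lemma crn_stablyComputes {grad : Fin d → ℚ} {B : (Fin d → ZMod p) → ℚ}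
    (hB : ∀ x : Fin d → ℕ,
      (g x : ℚ) = (∑ i, grad i * (x i : ℚ)) + B (fun i => (x i : ZMod p)))
    (hm : Monotone g) : (crn d p g).StablyComputes g := by
  intro x c hreach
  refine ⟨conf d p g x x, ?_, stable_full d p g x, rfl⟩
  rcases invariant d p g hB hm x c hreach with rfl | ⟨v, hv, rfl⟩
  · exact Relation.ReflTransGen.head (step_to_conf0 d p g x)
      (reach_full d p g hB hm x _ 0 (fun i => Nat.zero_le _) rfl)
  · exact reach_full d p g hB hm x _ v hv rfl

end QAC


/-- Every quilt-affine function with nonnegative outputs is obliviously-computable. -/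
theorem quiltAffine_obliviouslyComputable {d : ℕ} (g : (Fin d → ℕ) → ℕ)
    (hg : QuiltAffine fun x => (g x : ℤ)) :
    ObliviouslyComputable g := by
  obtain ⟨hmono, p, hp, grad, B, hgrad, hB⟩ := hg
  haveI : NeZero p := ⟨hp.ne'⟩
  have hm : Monotone g := fun a b hab => by
    have h : (g a : ℤ) ≤ (g b : ℤ) := hmono hab
    exact_mod_cast h
  have hB' : ∀ x : Fin d → ℕ,
      (g x : ℚ) = (∑ i, grad i * (x i : ℚ)) + B (fun i => (x i : ZMod p)) := by
    intro x
    have h : (((g x : ℤ)) : ℚ) = (∑ i, grad i * (x i : ℚ)) + B (fun i => (x i : ZMod p)) := hB x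
    exact_mod_cast h
  exact obliviouslyComputable_of_CRN (QAC.crn d p g)
    (QAC.crn_oblivious d p g) (QAC.crn_stablyComputes d p g hB' hm)
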